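/- Let K be a field and α ∈ K with α ≠ 0, α ≠ 1 and α ≠ −1. In the polynomial ring K[x,y,z,t], the ideal I generg_enerated by the six polynomials x² − x + αz² − αy, αx² + z² − z − αt, αt² + y² − y − αx, t² − t + αy² − αz, xy + αtz, zt + αxy is equal to the ideal generated by x² − x, y² − y, xy, z − y, t − x. Consequently the quotient K[x,y,z,t]/I is isomorphic as a K-algebra to K[x,y]/(x² − x, y² − y, xy), which is 3-dimensional with basis the classes of 1, x, y. -/

import Mathlib

open MvPolynomial

private lemma cancelC {K : Type*} [Field K] {σ : Type*} (I : Ideal (MvPolynomial σ K))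
    {e : K} (he : e ≠ 0) {p : MvPolynomial σ K} (h : C e * p ∈ I) : p ∈ I := by
  have hp : p = C e⁻¹ * (C e * p) := by
    rw [← mul_assoc, ← map_mul, inv_mul_cancel₀ he, map_one, one_mul]
  rw [hp]; exact I.mul_mem_left _ h

private lemma mem2 {R : Type*} [CommRing R] (I : Ideal R) {p q1 q2 : R}
    (h1 : q1 ∈ I) (h2 : q2 ∈ I) (c1 c2 : R) (h : p = c1 * q1 + c2 * q2) : p ∈ I := by
  rw [h]; exact I.add_mem (I.mul_mem_left _ h1) (I.mul_mem_left _ h2)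

private lemma mem3 {R : Type*} [CommRing R] (I : Ideal R) {p q1 q2 q3 : R}
    (h1 : q1 ∈ I) (h2 : q2 ∈ I) (h3 : q3 ∈ I) (c1 c2 c3 : R)
    (h : p = c1 * q1 + c2 * q2 + c3 * q3) : p ∈ I := by
  rw [h]
  exact I.add_mem (I.add_mem (I.mul_mem_left _ h1) (I.mul_mem_left _ h2)) (I.mul_mem_left _ h3)

private lemma mem4 {R : Type*} [CommRing R] (I : Ideal R) {p q1 q2 q3 q4 : R}
    (h1 : q1 ∈ I) (h2 : q2 ∈ I) (h3 : q3 ∈ I) (h4 : q4 ∈ I) (c1 c2 c3 c4 : R)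
    (h : p = c1 * q1 + c2 * q2 + c3 * q3 + c4 * q4) : p ∈ I := by
  rw [h]
  exact I.add_mem (I.add_mem (I.add_mem (I.mul_mem_left _ h1) (I.mul_mem_left _ h2))
    (I.mul_mem_left _ h3)) (I.mul_mem_left _ h4)

set_option maxHeartbeats 1600000 in
set_option synthInstance.maxHeartbeats 200000 in
/-- With `x = X 0`, `y = X 1`, `z = X 2`, `t = X 3` in `K[x,y,z,t]`
and `α ≠ 0, 1, −1`, the ideal `I` generated by the six polynomials defining the
universal `p`-algebra of `A_{5,α,α}` equals the ideal generated by
`x² − x`, `y² − y`, `xy`, `z − y`, `t − x`.  Consequently `K[x,y,z,t]/I` is isomorphic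
as a `K`-algebra to `K[x,y]/(x² − x, y² − y, xy)`, which is 3-dimensional with basis
the classes of `1, x, y`. -/
theorem stmt10 (K : Type*) [Field K] (α : K) (h0 : α ≠ 0) (h1 : α ≠ 1) (h2 : α ≠ -1)
    (I J : Ideal (MvPolynomial (Fin 4) K))
    (hI : I = Ideal.span
      {X 0 ^ 2 - X 0 + C α * X 2 ^ 2 - C α * X 1,
       C α * X 0 ^ 2 + X 2 ^ 2 - X 2 - C α * X 3,
       C α * X 3 ^ 2 + X 1 ^ 2 - X 1 - C α * X 0,
       X 3 ^ 2 - X 3 + C α * X 1 ^ 2 - C α * X 2,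
       X 0 * X 1 + C α * (X 3 * X 2),
       X 2 * X 3 + C α * (X 0 * X 1)})
    (hJ : J = Ideal.span
      {X 0 ^ 2 - X 0, X 1 ^ 2 - X 1, X 0 * X 1, X 2 - X 1, X 3 - X 0})
    (J2 : Ideal (MvPolynomial (Fin 2) K))
    (hJ2 : J2 = Ideal.span {X 0 ^ 2 - X 0, X 1 ^ 2 - X 1, X 0 * X 1}) :
    I = J ∧
    Nonempty ((MvPolynomial (Fin 4) K ⧸ I) ≃ₐ[K] (MvPolynomial (Fin 2) K ⧸ J2)) ∧
    Module.finrank K (MvPolynomial (Fin 2) K ⧸ J2) = 3 ∧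
    LinearIndependent K ![(1 : MvPolynomial (Fin 2) K ⧸ J2),
      Ideal.Quotient.mk J2 (X 0), Ideal.Quotient.mk J2 (X 1)] ∧
    Submodule.span K {(1 : MvPolynomial (Fin 2) K ⧸ J2),
      Ideal.Quotient.mk J2 (X 0), Ideal.Quotient.mk J2 (X 1)} = ⊤ := by
  have hu : (1 : K) - α ^ 2 ≠ 0 := by
    have hA : (1 : K) - α ≠ 0 := sub_ne_zero.mpr (Ne.symm h1)
    have hB : (1 : K) + α ≠ 0 := fun h => h2 (by rw [add_comm] at h; exact eq_neg_of_add_eq_zero_left h)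
    have := mul_ne_zero hA hB
    rwa [show ((1:K)-α)*(1+α) = 1 - α^2 by ring] at this
  have hu2 : ((1 : K) - α ^ 2) ^ 2 ≠ 0 := pow_ne_zero _ hu
  -- generators of I
  have hg1 : (X 0 ^ 2 - X 0 + C α * X 2 ^ 2 - C α * X 1 : MvPolynomial (Fin 4) K) ∈ I := by
    rw [hI]; exact Ideal.subset_span (Set.mem_insert _ _)
  have hg2 : (C α * X 0 ^ 2 + X 2 ^ 2 - X 2 - C α * X 3 : MvPolynomial (Fin 4) K) ∈ I := by
    rw [hI]; exact Ideal.subset_span (Set.mem_insert_of_mem _ (Set.mem_insert _ _))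
  have hg3 : (C α * X 3 ^ 2 + X 1 ^ 2 - X 1 - C α * X 0 : MvPolynomial (Fin 4) K) ∈ I := by
    rw [hI]
    exact Ideal.subset_span (Set.mem_insert_of_mem _ (Set.mem_insert_of_mem _ (Set.mem_insert _ _)))
  have hg4 : (X 3 ^ 2 - X 3 + C α * X 1 ^ 2 - C α * X 2 : MvPolynomial (Fin 4) K) ∈ I := by
    rw [hI]
    exact Ideal.subset_span (Set.mem_insert_of_mem _ (Set.mem_insert_of_mem _
      (Set.mem_insert_of_mem _ (Set.mem_insert _ _))))
  have hg5 : (X 0 * X 1 + C α * (X 3 * X 2) : MvPolynomial (Fin 4) K) ∈ I := by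
    rw [hI]
    exact Ideal.subset_span (Set.mem_insert_of_mem _ (Set.mem_insert_of_mem _
      (Set.mem_insert_of_mem _ (Set.mem_insert_of_mem _ (Set.mem_insert _ _)))))
  have hg6 : (X 2 * X 3 + C α * (X 0 * X 1) : MvPolynomial (Fin 4) K) ∈ I := by
    rw [hI]
    exact Ideal.subset_span (Set.mem_insert_of_mem _ (Set.mem_insert_of_mem _
      (Set.mem_insert_of_mem _ (Set.mem_insert_of_mem _ (Set.mem_insert_of_mem _ rfl)))))
  -- basic products
  have hzt : (X 2 * X 3 : MvPolynomial (Fin 4) K) ∈ I := by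
    refine cancelC I hu (mem2 I hg6 hg5 1 (-(C α)) ?_)
    simp only [map_pow, map_sub, map_one]; ring
  have hxy : (X 0 * X 1 : MvPolynomial (Fin 4) K) ∈ I := by
    refine cancelC I hu (mem2 I hg5 hg6 1 (-(C α)) ?_)
    simp only [map_pow, map_sub, map_one]; ring

  -- linear-elimination combinations
  have hrx : ((1 - C α ^ 2) * X 0 ^ 2 - X 0 - C α * X 1 + C α * X 2 + C α ^ 2 * X 3 :
      MvPolynomial (Fin 4) K) ∈ I :=
    mem2 I hg1 hg2 1 (-(C α)) (by ring)
  have hry : ((1 - C α ^ 2) * X 1 ^ 2 - X 1 - C α * X 0 + C α * X 3 + C α ^ 2 * X 2 :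
      MvPolynomial (Fin 4) K) ∈ I :=
    mem2 I hg3 hg4 1 (-(C α)) (by ring)
  have hrz : ((1 - C α ^ 2) * X 2 ^ 2 - X 2 - C α * X 3 + C α * X 0 + C α ^ 2 * X 1 :
      MvPolynomial (Fin 4) K) ∈ I :=
    mem2 I hg2 hg1 1 (-(C α)) (by ring)
  have hrt : ((1 - C α ^ 2) * X 3 ^ 2 - X 3 - C α * X 2 + C α * X 1 + C α ^ 2 * X 0 :
      MvPolynomial (Fin 4) K) ∈ I :=
    mem2 I hg4 hg3 1 (-(C α)) (by ring)
  have hM1 : (X 1 ^ 2 - X 1 * X 2 - C α * (X 3 * X 1) : MvPolynomial (Fin 4) K) ∈ I := by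
    refine cancelC I h0 (mem2 I hrx hxy (-(X 1)) ((1 - C α ^ 2) * X 0 - 1) ?_)
    ring
  have hM2 : (X 0 ^ 2 - X 3 * X 0 - C α * (X 0 * X 2) : MvPolynomial (Fin 4) K) ∈ I := by
    refine cancelC I h0 (mem2 I hry hxy (-(X 0)) ((1 - C α ^ 2) * X 1 - 1) ?_)
    ring
  have hM3 : (X 3 ^ 2 - X 0 * X 3 - C α * (X 1 * X 3) : MvPolynomial (Fin 4) K) ∈ I := by
    refine cancelC I h0 (mem2 I hrz hzt (-(X 3)) ((1 - C α ^ 2) * X 2 - 1) ?_)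
    ring
  have hM4 : (X 2 ^ 2 - X 1 * X 2 - C α * (X 0 * X 2) : MvPolynomial (Fin 4) K) ∈ I := by
    refine cancelC I h0 (mem2 I hrt hzt (-(X 2)) ((1 - C α ^ 2) * X 3 - 1) ?_)
    ring
  have hA1 : (X 0 ^ 2 * X 3 - X 3 ^ 2 : MvPolynomial (Fin 4) K) ∈ I := by
    refine cancelC I hu (mem3 I hrx hzt hM3 (X 3) (-(C α)) (-1) ?_)
    simp only [map_pow, map_sub, map_one]; ring
  have hA2 : (X 3 ^ 2 * X 0 - X 0 ^ 2 : MvPolynomial (Fin 4) K) ∈ I := by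
    refine cancelC I hu (mem3 I hrt hxy hM2 (X 0) (-(C α)) (-1) ?_)
    simp only [map_pow, map_sub, map_one]; ring
  have hA3 : (X 3 ^ 2 * X 0 - X 0 ^ 2 * X 3 : MvPolynomial (Fin 4) K) ∈ I :=
    mem2 I hM3 hxy (X 0) (C α * X 3) (by ring)
  have hB1 : (X 0 ^ 2 - X 3 ^ 2 : MvPolynomial (Fin 4) K) ∈ I :=
    mem3 I hA1 hA2 hA3 1 (-1) 1 (by ring)
  have hA4 : (X 1 ^ 2 * X 2 - X 2 ^ 2 : MvPolynomial (Fin 4) K) ∈ I := by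
    refine cancelC I hu (mem3 I hry hzt hM4 (X 2) (-(C α)) (-1) ?_)
    simp only [map_pow, map_sub, map_one]; ring
  have hA5 : (X 2 ^ 2 * X 1 - X 1 ^ 2 : MvPolynomial (Fin 4) K) ∈ I := by
    refine cancelC I hu (mem3 I hrz hxy hM1 (X 1) (-(C α)) (-1) ?_)
    simp only [map_pow, map_sub, map_one]; ring
  have hA6 : (X 1 ^ 2 * X 2 - X 2 ^ 2 * X 1 : MvPolynomial (Fin 4) K) ∈ I :=
    mem2 I hM1 hzt (X 2) (C α * X 1) (by ring)
  have hB2 : (X 1 ^ 2 - X 2 ^ 2 : MvPolynomial (Fin 4) K) ∈ I :=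
    mem3 I hA4 hA5 hA6 1 (-1) (-1) (by ring)
  have hL1 : ((1 + C α ^ 2) * (X 3 - X 0) + 2 * C α * (X 2 - X 1) :
      MvPolynomial (Fin 4) K) ∈ I :=
    mem3 I hrx hrt hB1 1 (-1) (-(1 - C α ^ 2)) (by ring)
  have hL2 : ((1 + C α ^ 2) * (X 2 - X 1) + 2 * C α * (X 3 - X 0) :
      MvPolynomial (Fin 4) K) ∈ I :=
    mem3 I hry hrz hB2 1 (-1) (-(1 - C α ^ 2)) (by ring)
  have hj5 : (X 3 - X 0 : MvPolynomial (Fin 4) K) ∈ I := by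
    refine cancelC I hu2 (mem2 I hL1 hL2 (1 + C α ^ 2) (-(2 * C α)) ?_)
    simp only [map_pow, map_sub, map_one]; ring
  have hj4 : (X 2 - X 1 : MvPolynomial (Fin 4) K) ∈ I := by
    refine cancelC I hu2 (mem2 I hL2 hL1 (1 + C α ^ 2) (-(2 * C α)) ?_)
    simp only [map_pow, map_sub, map_one]; ring
  have hj1 : (X 0 ^ 2 - X 0 : MvPolynomial (Fin 4) K) ∈ I := by
    refine cancelC I hu (mem3 I hrx hj4 hj5 1 (-(C α)) (-(C α ^ 2)) ?_)
    simp only [map_pow, map_sub, map_one]; ring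
  have hj2 : (X 1 ^ 2 - X 1 : MvPolynomial (Fin 4) K) ∈ I := by
    refine cancelC I hu (mem3 I hry hj5 hj4 1 (-(C α)) (-(C α ^ 2)) ?_)
    simp only [map_pow, map_sub, map_one]; ring
  -- members of J
  have hJa : (X 0 ^ 2 - X 0 : MvPolynomial (Fin 4) K) ∈ J := by
    rw [hJ]; exact Ideal.subset_span (Set.mem_insert _ _)
  have hJb : (X 1 ^ 2 - X 1 : MvPolynomial (Fin 4) K) ∈ J := by
    rw [hJ]; exact Ideal.subset_span (Set.mem_insert_of_mem _ (Set.mem_insert _ _))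
  have hJc : (X 0 * X 1 : MvPolynomial (Fin 4) K) ∈ J := by
    rw [hJ]
    exact Ideal.subset_span (Set.mem_insert_of_mem _ (Set.mem_insert_of_mem _ (Set.mem_insert _ _)))
  have hJd : (X 2 - X 1 : MvPolynomial (Fin 4) K) ∈ J := by
    rw [hJ]
    exact Ideal.subset_span (Set.mem_insert_of_mem _ (Set.mem_insert_of_mem _
      (Set.mem_insert_of_mem _ (Set.mem_insert _ _))))
  have hJe : (X 3 - X 0 : MvPolynomial (Fin 4) K) ∈ J := by
    rw [hJ]
    exact Ideal.subset_span (Set.mem_insert_of_mem _ (Set.mem_insert_of_mem _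
      (Set.mem_insert_of_mem _ (Set.mem_insert_of_mem _ rfl))))
  have hIJ : I = J := by
    refine le_antisymm ?_ ?_
    -- the two inclusions
    · rw [hI, Ideal.span_le]
      rintro p (rfl | rfl | rfl | rfl | rfl | rfl)
      · exact mem3 J hJa hJd hJb 1 (C α * (X 2 + X 1)) (C α) (by ring)
      · exact mem4 J hJa hJb hJd hJe (C α) 1 (X 2 + X 1 - 1) (-(C α)) (by ring)
      · exact mem3 J hJa hJb hJe (C α) 1 (C α * (X 3 + X 0)) (by ring)
      · exact mem4 J hJa hJb hJd hJe 1 (C α) (-(C α)) (X 3 + X 0 - 1) (by ring)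
      · exact mem3 J hJc hJd hJe (1 + C α) (C α * X 0) (C α * X 2) (by ring)
      · exact mem3 J hJc hJd hJe (1 + C α) (X 0) (X 2) (by ring)
    · rw [hJ, Ideal.span_le]
      rintro p (rfl | rfl | rfl | rfl | rfl)
      · exact hj1
      · exact hj2
      · exact hxy
      · exact hj4
      · exact hj5

  have hk1 : (X 0 ^ 2 - X 0 : MvPolynomial (Fin 2) K) ∈ J2 := by
    rw [hJ2]; exact Ideal.subset_span (Set.mem_insert _ _)
  have hk2 : (X 1 ^ 2 - X 1 : MvPolynomial (Fin 2) K) ∈ J2 := by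
    rw [hJ2]; exact Ideal.subset_span (Set.mem_insert_of_mem _ (Set.mem_insert _ _))
  have hk3 : (X 0 * X 1 : MvPolynomial (Fin 2) K) ∈ J2 := by
    rw [hJ2]; exact Ideal.subset_span (Set.mem_insert_of_mem _ (Set.mem_insert_of_mem _ rfl))
  have hker1 : ∀ p ∈ J,
      ((Ideal.Quotient.mkₐ K J2).comp (aeval ![X 0, X 1, X 1, X 0])) p = 0 := by
    intro p hp
    rw [hJ] at hp
    have hle : Ideal.span {X 0 ^ 2 - X 0, X 1 ^ 2 - X 1, X 0 * X 1, X 2 - X 1, X 3 - X 0} ≤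
        RingHom.ker ((Ideal.Quotient.mkₐ K J2).comp (aeval ![X 0, X 1, X 1, X 0])) := by
      apply Ideal.span_le.mpr
      rintro p (rfl | rfl | rfl | rfl | rfl) <;>
        rw [SetLike.mem_coe, RingHom.mem_ker, AlgHom.comp_apply, Ideal.Quotient.mkₐ_eq_mk,
          Ideal.Quotient.eq_zero_iff_mem] <;>
        simp only [map_sub, map_pow, map_mul, aeval_X, Matrix.cons_val_zero, Matrix.cons_val_one,
          Matrix.head_cons, Matrix.cons_val_two, Matrix.cons_val_three, Matrix.tail_cons, sub_self]
      · exact hk1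
      · exact hk2
      · exact hk3
      · exact J2.zero_mem
      · exact J2.zero_mem
    exact hle hp
  have hker2 : ∀ p ∈ J2,
      ((Ideal.Quotient.mkₐ K J).comp (aeval ![X 0, X 1])) p = 0 := by
    intro p hp
    rw [hJ2] at hp
    have hle : Ideal.span {X 0 ^ 2 - X 0, X 1 ^ 2 - X 1, X 0 * X 1} ≤
        RingHom.ker ((Ideal.Quotient.mkₐ K J).comp (aeval ![X 0, X 1])) := by
      apply Ideal.span_le.mpr
      rintro p (rfl | rfl | rfl) <;>
        rw [SetLike.mem_coe, RingHom.mem_ker, AlgHom.comp_apply, Ideal.Quotient.mkₐ_eq_mk,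
          Ideal.Quotient.eq_zero_iff_mem] <;>
        simp only [map_sub, map_pow, map_mul, aeval_X, Matrix.cons_val_zero, Matrix.cons_val_one,
          Matrix.head_cons]
      · exact hJa
      · exact hJb
      · exact hJc
    exact hle hp
  have hz : Ideal.Quotient.mk J (X 2) = Ideal.Quotient.mk J (X 1) :=
    (Ideal.Quotient.mk_eq_mk_iff_sub_mem _ _).mpr hJd
  have ht : Ideal.Quotient.mk J (X 3) = Ideal.Quotient.mk J (X 0) :=
    (Ideal.Quotient.mk_eq_mk_iff_sub_mem _ _).mpr hJe
  have hvec2 : ∀ i : Fin 2, Ideal.Quotient.mk J2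
      ((aeval (![X 0, X 1, X 1, X 0] : Fin 4 → MvPolynomial (Fin 2) K))
        ((![X 0, X 1] : Fin 2 → MvPolynomial (Fin 4) K) i)) = Ideal.Quotient.mk J2 (X i) := by
    intro i; fin_cases i <;> simp
  have hvec4 : ∀ i : Fin 4, Ideal.Quotient.mk J
      ((aeval (![X 0, X 1] : Fin 2 → MvPolynomial (Fin 4) K))
        ((![X 0, X 1, X 1, X 0] : Fin 4 → MvPolynomial (Fin 2) K) i)) = Ideal.Quotient.mk J (X i) := by
    intro i; fin_cases i <;> simp [hz, ht]
  have hxx : Ideal.Quotient.mk J2 (X 0) * Ideal.Quotient.mk J2 (X 0) =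
      Ideal.Quotient.mk J2 (X 0) := by
    rw [← map_mul, Ideal.Quotient.mk_eq_mk_iff_sub_mem]
    simpa [sq] using hk1
  have hyy : Ideal.Quotient.mk J2 (X 1) * Ideal.Quotient.mk J2 (X 1) =
      Ideal.Quotient.mk J2 (X 1) := by
    rw [← map_mul, Ideal.Quotient.mk_eq_mk_iff_sub_mem]
    simpa [sq] using hk2
  have hxy0 : Ideal.Quotient.mk J2 (X 0) * Ideal.Quotient.mk J2 (X 1) = 0 := by
    rw [← map_mul]; exact Ideal.Quotient.eq_zero_iff_mem.mpr hk3
  have hCa : ∀ (a : K) (p : MvPolynomial (Fin 2) K),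
      Ideal.Quotient.mk J2 (C a * p) = a • Ideal.Quotient.mk J2 p := by
    intro a p
    rw [← MvPolynomial.smul_eq_C_mul]
    exact map_smul (Ideal.Quotient.mkₐ K J2) a p
  have hC1 : ∀ a : K, Ideal.Quotient.mk J2 (C a) =
      a • (1 : MvPolynomial (Fin 2) K ⧸ J2) := by
    intro a
    have := hCa a 1
    rwa [mul_one, map_one] at this
  set S : Submodule K (MvPolynomial (Fin 2) K ⧸ J2) :=
    Submodule.span K {(1 : MvPolynomial (Fin 2) K ⧸ J2),
      Ideal.Quotient.mk J2 (X 0), Ideal.Quotient.mk J2 (X 1)} with hS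
  have h1S : (1 : MvPolynomial (Fin 2) K ⧸ J2) ∈ S := Submodule.subset_span (Set.mem_insert _ _)
  have hxS : Ideal.Quotient.mk J2 (X 0) ∈ S :=
    Submodule.subset_span (Set.mem_insert_of_mem _ (Set.mem_insert _ _))
  have hyS : Ideal.Quotient.mk J2 (X 1) ∈ S :=
    Submodule.subset_span (Set.mem_insert_of_mem _ (Set.mem_insert_of_mem _ rfl))
  have hm0 : ∀ v ∈ S, v * Ideal.Quotient.mk J2 (X 0) ∈ S := by
    intro v hv
    induction hv using Submodule.span_induction with
    | mem w hw =>
      rcases hw with rfl | rfl | rfl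
      · rw [one_mul]; exact hxS
      · rw [hxx]; exact hxS
      · rw [mul_comm, hxy0]; exact S.zero_mem
    | zero => rw [zero_mul]; exact S.zero_mem
    | add u w _ _ hu hw => rw [add_mul]; exact S.add_mem hu hw
    | smul c u _ hu => rw [smul_mul_assoc]; exact S.smul_mem c hu
  have hm1 : ∀ v ∈ S, v * Ideal.Quotient.mk J2 (X 1) ∈ S := by
    intro v hv
    induction hv using Submodule.span_induction with
    | mem w hw =>
      rcases hw with rfl | rfl | rfl
      · rw [one_mul]; exact hyS
      · rw [hxy0]; exact S.zero_mem
      · rw [hyy]; exact hyS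
    | zero => rw [zero_mul]; exact S.zero_mem
    | add u w _ _ hu hw => rw [add_mul]; exact S.add_mem hu hw
    | smul c u _ hu => rw [smul_mul_assoc]; exact S.smul_mem c hu
  have hmulX : ∀ i : Fin 2, ∀ v ∈ S, v * Ideal.Quotient.mk J2 (X i) ∈ S := by
    intro i
    fin_cases i
    · exact hm0
    · exact hm1
  have hspan : S = ⊤ := by
    rw [eq_top_iff]
    rintro v -
    obtain ⟨p, rfl⟩ := Ideal.Quotient.mk_surjective v
    induction p using MvPolynomial.induction_on with
    | C a => rw [hC1 a]; exact S.smul_mem a h1S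
    | add p q hp hq => rw [map_add]; exact S.add_mem hp hq
    | mul_X p i hp => rw [map_mul]; exact hmulX i _ hp
  have hli : LinearIndependent K ![(1 : MvPolynomial (Fin 2) K ⧸ J2),
      Ideal.Quotient.mk J2 (X 0), Ideal.Quotient.mk J2 (X 1)] := by
    rw [Fintype.linearIndependent_iff]
    intro g hg
    rw [Fin.sum_univ_three] at hg
    simp only [Matrix.cons_val_zero, Matrix.cons_val_one, Matrix.head_cons,
      Matrix.cons_val_two, Matrix.tail_cons] at hg
    have hmem : (C (g 0) + C (g 1) * X 0 + C (g 2) * X 1 : MvPolynomial (Fin 2) K) ∈ J2 := by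
      rw [← Ideal.Quotient.eq_zero_iff_mem]
      rw [map_add, map_add, hCa, hCa, hC1, hg]
    have hev : ∀ w : Fin 2 → K, (∀ q ∈ J2, aeval w q = 0) →
        g 0 + g 1 * w 0 + g 2 * w 1 = 0 := by
      intro w hw
      have := hw _ hmem
      simpa using this
    have hker : ∀ w : Fin 2 → K, aeval w (X 0 ^ 2 - X 0 : MvPolynomial (Fin 2) K) = 0 →
        aeval w (X 1 ^ 2 - X 1 : MvPolynomial (Fin 2) K) = 0 →
        aeval w (X 0 * X 1 : MvPolynomial (Fin 2) K) = 0 →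
        ∀ q ∈ J2, aeval w q = 0 := by
      intro w e1 e2 e3 q hq
      rw [hJ2] at hq
      have hle : Ideal.span {X 0 ^ 2 - X 0, X 1 ^ 2 - X 1, X 0 * X 1} ≤
          RingHom.ker (aeval w : MvPolynomial (Fin 2) K →ₐ[K] K) := by
        apply Ideal.span_le.mpr
        rintro q (rfl | rfl | rfl) <;> assumption
      exact hle hq
    have e1 := hev ![0, 0] (hker _ (by simp) (by simp) (by simp))
    have e2 := hev ![1, 0] (hker _ (by simp) (by simp) (by simp))
    have e3 := hev ![0, 1] (hker _ (by simp) (by simp) (by simp))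
    simp only [Matrix.cons_val_zero, Matrix.cons_val_one, Matrix.head_cons, mul_zero, mul_one,
      add_zero] at e1 e2 e3
    intro i
    fin_cases i
    · exact e1
    · show g 1 = 0
      linear_combination e2 - e1
    · show g 2 = 0
      linear_combination e3 - e1
  have hrange : Set.range ![(1 : MvPolynomial (Fin 2) K ⧸ J2),
      Ideal.Quotient.mk J2 (X 0), Ideal.Quotient.mk J2 (X 1)] =
      {(1 : MvPolynomial (Fin 2) K ⧸ J2),
        Ideal.Quotient.mk J2 (X 0), Ideal.Quotient.mk J2 (X 1)} := by
    ext w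
    constructor
    · rintro ⟨i, rfl⟩
      fin_cases i
      · exact Set.mem_insert _ _
      · exact Set.mem_insert_of_mem _ (Set.mem_insert _ _)
      · exact Set.mem_insert_of_mem _ (Set.mem_insert_of_mem _ rfl)
    · rintro (rfl | rfl | rfl)
      · exact ⟨0, rfl⟩
      · exact ⟨1, rfl⟩
      · exact ⟨2, rfl⟩
  have hfr : Module.finrank K (MvPolynomial (Fin 2) K ⧸ J2) = 3 := by
    have b : Module.Basis (Fin 3) K (MvPolynomial (Fin 2) K ⧸ J2) :=
      Module.Basis.mk hli (by rw [hrange, ← hS, hspan])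
    rw [Module.finrank_eq_card_basis b, Fintype.card_fin]
  refine ⟨hIJ, ?_, hfr, hli, hspan⟩
  rw [hIJ]
  refine ⟨AlgEquiv.ofAlgHom
    (Ideal.Quotient.liftₐ J ((Ideal.Quotient.mkₐ K J2).comp (aeval ![X 0, X 1, X 1, X 0])) hker1)
    (Ideal.Quotient.liftₐ J2 ((Ideal.Quotient.mkₐ K J).comp (aeval ![X 0, X 1])) hker2)
    ?_ ?_⟩
  · apply Ideal.Quotient.algHom_ext
    apply MvPolynomial.algHom_ext
    intro i
    simp only [AlgHom.coe_comp, Function.comp_apply, Ideal.Quotient.mkₐ_eq_mk,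
      Ideal.Quotient.liftₐ_apply, Ideal.Quotient.lift_mk, AlgHom.coe_toRingHom,
      AlgHom.id_apply, aeval_X]
    have := hvec2 i
    rw [← aeval_X (R := K) (![X 0, X 1] : Fin _ → MvPolynomial (Fin 4) K) i] at this
    exact this
  · apply Ideal.Quotient.algHom_ext
    apply MvPolynomial.algHom_ext
    intro i
    simp only [AlgHom.coe_comp, Function.comp_apply, Ideal.Quotient.mkₐ_eq_mk,
      Ideal.Quotient.liftₐ_apply, Ideal.Quotient.lift_mk, AlgHom.coe_toRingHom,
      AlgHom.id_apply, aeval_X]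
    have := hvec4 i
    rw [← aeval_X (R := K) (![X 0, X 1, X 1, X 0] : Fin _ → MvPolynomial (Fin 2) K) i] at this
    exact this
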